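/- Let δ : D → C be a monomorphism of coalgebras in an abelian monoidal category M with left exact tensor functors, let (L, p) be the cokernel of δ, and define D^{∧^n} = Ker(p^{⊗n} ∘ Δ_C^{n-1}) with inclusion δ_n : D^{∧^n} → C. Then for all i ≤ j there exists a unique morphism ξ_i^j : D^{∧^i} → D^{∧^j} with δ_j ∘ ξ_i^j = δ_i, each ξ_i^j is a coalgebra homomorphism, and ((D^{∧^i}), (ξ_i^j)) forms a direct system in M. -/

import Mathlib

open CategoryTheory CategoryTheory.Limits MonoidalCategory

universe v u

variable {M : Type u} [Category.{v} M] [MonoidalCategory M]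

/-- `pow X n = X^{⊗ (n+1)}`. -/
def pow (X : M) : ℕ → M
  | 0 => X
  | n + 1 => pow X n ⊗ X

/-- `powHom f n = f^{⊗ (n+1)}`. -/
def powHom {X Y : M} (f : X ⟶ Y) : ∀ n : ℕ, pow X n ⟶ pow Y n
  | 0 => f
  | n + 1 => powHom f n ⊗ₘ f

/-- The `n`-th iterated comultiplication `Δ_C^n : C ⟶ C^{⊗ (n+1)}` of a coalgebra. -/
def itComul (C : Comon M) : ∀ n : ℕ, C.X ⟶ pow C.X n
  | 0 => 𝟙 C.X
  | n + 1 => ComonObj.comul (X := C.X) ≫ (itComul C n ▷ C.X)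

/-- comultiplication on the last tensor factor -/
def lastComul (C : Comon M) : ∀ n : ℕ, pow C.X n ⟶ pow C.X (n + 1)
  | 0 => ComonObj.comul (X := C.X)
  | n + 1 => (pow C.X n ◁ ComonObj.comul (X := C.X)) ≫ (α_ (pow C.X n) C.X C.X).inv

theorem itComul_succ (C : Comon M) (n : ℕ) :
    itComul C (n + 1) = itComul C n ≫ lastComul C n := by
  induction n with
  | zero =>
    simp [itComul, lastComul]
    show ComonObj.comul (X := C.X) ≫ (𝟙 C.X ▷ C.X : C.X ⊗ C.X ⟶ C.X ⊗ C.X) = (𝟙 C.X ≫ ComonObj.comul (X := C.X) : C.X ⟶ C.X ⊗ C.X)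
    simp
  | succ n _ =>
    show ComonObj.comul (X := C.X) ≫ ((ComonObj.comul (X := C.X) ≫ (itComul C n ▷ C.X)) ▷ C.X)
        = (ComonObj.comul (X := C.X) ≫ (itComul C n ▷ C.X)) ≫ lastComul C (n + 1)
    rw [lastComul, comp_whiskerRight]
    show ComonObj.comul (X := C.X) ≫ (ComonObj.comul (X := C.X) ▷ C.X ≫ (itComul C n ▷ C.X) ▷ C.X)
        = (ComonObj.comul (X := C.X) ≫ itComul C n ▷ C.X) ≫ (pow C.X n ◁ ComonObj.comul (X := C.X)) ≫ (α_ (pow C.X n) C.X C.X).inv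
    simp only [Category.assoc]
    rw [← whisker_exchange_assoc, ComonObj.comul_assoc_assoc,
      ← associator_naturality_left_assoc]
    simp


variable [Abelian M]

/-- `D^{∧_C^{n+1}} = Ker(p^{⊗ (n+1)} ∘ Δ_C^n)`, where `p` is the cokernel projection of `δ`. -/
noncomputable abbrev wedgeObj {D C : Comon M} (δ : D ⟶ C) (n : ℕ) : M :=
  kernel (itComul C n ≫ powHom (cokernel.π δ.hom) n)

/-- the inclusion `δ_{n+1} : D^{∧_C^{n+1}} ⟶ C` -/
noncomputable abbrev wedgeι {D C : Comon M} (δ : D ⟶ C) (n : ℕ) : wedgeObj δ n ⟶ C.X :=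
  kernel.ι (itComul C n ≫ powHom (cokernel.π δ.hom) n)

theorem wedge_step
    [∀ X : M, PreservesFiniteLimits (tensorLeft X)]
    {D C : Comon M} (δ : D ⟶ C) {T : M} (f : T ⟶ C.X) (n : ℕ)
    (h : f ≫ (itComul C n ≫ powHom (cokernel.π δ.hom) n) = 0) :
    f ≫ (itComul C (n + 1) ≫ powHom (cokernel.π δ.hom) (n + 1)) = 0 := by
  set p := cokernel.π δ.hom with hp
  have hδ : δ.hom ≫ ComonObj.comul (X := C.X) ≫ (p ⊗ₘ p) = 0 := by
    rw [← Category.assoc, IsComonHom.hom_comul, Category.assoc, tensorHom_comp_tensorHom]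
    have hz : δ.hom ≫ p = 0 := cokernel.condition _
    rw [hz, MonoidalCategory.tensorHom_def]
    have h2 : (cokernel δ.hom) ◁ (0 : D.X ⟶ cokernel δ.hom) = 0 := by
      simpa using (tensorLeft (cokernel δ.hom)).map_zero D.X (cokernel δ.hom)
    rw [h2]
    simp
  set q : cokernel δ.hom ⟶ cokernel δ.hom ⊗ cokernel δ.hom :=
    cokernel.desc δ.hom (ComonObj.comul (X := C.X) ≫ (p ⊗ₘ p)) hδ with hq
  have hpq : p ≫ q = ComonObj.comul (X := C.X) ≫ (p ⊗ₘ p) := cokernel.π_desc _ _ _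
  cases n with
  | zero =>
    have e : itComul C 1 ≫ powHom p 1 = ComonObj.comul (X := C.X) ≫ (p ⊗ₘ p) := by
      simp [itComul, powHom]
      show (ComonObj.comul (X := C.X) ≫ (𝟙 C.X ▷ C.X : C.X ⊗ C.X ⟶ C.X ⊗ C.X)) ≫ (p ⊗ₘ p) = _
      simp
    have h0 : f ≫ p = 0 := by rw [← Category.id_comp p]; exact h
    rw [e, ← hpq]
    show f ≫ p ≫ q = 0
    rw [← Category.assoc, h0, zero_comp]
  | succ m =>
    have key : lastComul C (m + 1) ≫ powHom p (m + 2)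
        = powHom p (m + 1) ≫ (pow (cokernel δ.hom) m ◁ q) ≫
            (α_ (pow (cokernel δ.hom) m) (cokernel δ.hom) (cokernel δ.hom)).inv := by
      show ((pow C.X m ◁ ComonObj.comul (X := C.X)) ≫ (α_ _ _ _).inv) ≫ ((powHom p m ⊗ₘ p) ⊗ₘ p) = _
      rw [Category.assoc, ← associator_inv_naturality, ← Category.assoc]
      have e1 : (pow C.X m ◁ ComonObj.comul (X := C.X)) ≫ (powHom p m ⊗ₘ (p ⊗ₘ p))
          = powHom p (m + 1) ≫ (pow (cokernel δ.hom) m ◁ q) := by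
        rw [← id_tensorHom, tensorHom_comp_tensorHom, Category.id_comp, ← hpq]
        show powHom p m ⊗ₘ (p ≫ q) = (powHom p m ⊗ₘ p) ≫ _
        rw [← id_tensorHom, tensorHom_comp_tensorHom, Category.comp_id]
      rw [e1]; exact Category.assoc _ _ _
    rw [itComul_succ]
    have : f ≫ ((itComul C (m + 1) ≫ lastComul C (m + 1)) ≫ powHom p (m + 2))
        = (f ≫ (itComul C (m + 1) ≫ powHom p (m + 1))) ≫
            (pow (cokernel δ.hom) m ◁ q) ≫ (α_ _ _ _).inv := by
      rw [Category.assoc, key]; simp only [Category.assoc]; rfl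
    rw [this, h, zero_comp]
    rfl

theorem wedge_mono
    [∀ X : M, PreservesFiniteLimits (tensorLeft X)]
    {D C : Comon M} (δ : D ⟶ C) (i j : ℕ) (hij : i ≤ j) :
    wedgeι δ i ≫ (itComul C j ≫ powHom (cokernel.π δ.hom) j) = 0 := by
  induction j with
  | zero =>
    interval_cases i
    exact kernel.condition _
  | succ j ih =>
    rcases Nat.lt_or_ge i (j + 1) with h | h
    · exact wedge_step δ _ _ (ih (Nat.lt_succ_iff.mp h))
    · have : i = j + 1 := le_antisymm hij h
      subst this
      exact kernel.condition _


/-- Let `δ : D → C` be a monomorphism of coalgebras in an abelian monoidal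
category with left exact tensor functors.  Then for `i ≤ j` there is a unique morphism
`ξ_i^j : D^{∧ i} ⟶ D^{∧ j}` compatible with the kernel inclusions into `C`; each such `ξ_i^j`
is a coalgebra homomorphism (with respect to the induced coalgebra structures on the wedge
powers, i.e. those making the inclusions coalgebra morphisms), and the `ξ_i^j` form a direct
system. -/
theorem stmt2
    [∀ X : M, PreservesFiniteLimits (tensorLeft X)]
    [∀ X : M, PreservesFiniteLimits (tensorRight X)]
    (D C : Comon M) (δ : D ⟶ C) (hmono : Mono δ.hom) :
    -- existence and uniqueness of the transition morphisms
    (∀ i j : ℕ, i ≤ j →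
      ∃! ξ : wedgeObj δ i ⟶ wedgeObj δ j, ξ ≫ wedgeι δ j = wedgeι δ i) ∧
    -- each transition morphism is a coalgebra homomorphism
    (∀ i j : ℕ, i ≤ j → ∀ ξ : wedgeObj δ i ⟶ wedgeObj δ j, ξ ≫ wedgeι δ j = wedgeι δ i →
      ∀ (Δi : wedgeObj δ i ⟶ wedgeObj δ i ⊗ wedgeObj δ i) (εi : wedgeObj δ i ⟶ 𝟙_ M)
        (Δj : wedgeObj δ j ⟶ wedgeObj δ j ⊗ wedgeObj δ j) (εj : wedgeObj δ j ⟶ 𝟙_ M),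
        wedgeι δ i ≫ ComonObj.comul (X := C.X) = Δi ≫ (wedgeι δ i ⊗ₘ wedgeι δ i) →
        wedgeι δ i ≫ ComonObj.counit (X := C.X) = εi →
        wedgeι δ j ≫ ComonObj.comul (X := C.X) = Δj ≫ (wedgeι δ j ⊗ₘ wedgeι δ j) →
        wedgeι δ j ≫ ComonObj.counit (X := C.X) = εj →
        ξ ≫ Δj = Δi ≫ (ξ ⊗ₘ ξ) ∧ ξ ≫ εj = εi) ∧
    -- the transition morphisms form a direct system
    (∀ i j k : ℕ, i ≤ j → j ≤ k →
      ∀ (ξij : wedgeObj δ i ⟶ wedgeObj δ j) (ξjk : wedgeObj δ j ⟶ wedgeObj δ k)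
        (ξik : wedgeObj δ i ⟶ wedgeObj δ k),
        ξij ≫ wedgeι δ j = wedgeι δ i → ξjk ≫ wedgeι δ k = wedgeι δ j →
        ξik ≫ wedgeι δ k = wedgeι δ i → ξij ≫ ξjk = ξik) := by
  refine ⟨?_, ?_, ?_⟩
  · intro i j hij
    refine ⟨kernel.lift _ (wedgeι δ i) (wedge_mono δ i j hij), kernel.lift_ι _ _ _, ?_⟩
    intro ξ' hξ'
    rw [← cancel_mono (wedgeι δ j), hξ', kernel.lift_ι]
  · intro i j hij ξ hξ Δi εi Δj εj hΔi hεi hΔj hεj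
    constructor
    · have hm : Mono (wedgeι δ j ⊗ₘ wedgeι δ j) := by
        rw [MonoidalCategory.tensorHom_def]
        have h1 : Mono (wedgeι δ j ▷ wedgeObj δ j) := by
          have := (tensorRight (wedgeObj δ j)).map_mono (wedgeι δ j)
          simpa using this
        have h2 : Mono ((C.X : M) ◁ wedgeι δ j) := by
          have := (tensorLeft (C.X : M)).map_mono (wedgeι δ j)
          simpa using this
        exact mono_comp _ _
      rw [← cancel_mono (wedgeι δ j ⊗ₘ wedgeι δ j), Category.assoc, ← hΔj,
        ← Category.assoc, hξ, hΔi, Category.assoc, tensorHom_comp_tensorHom, hξ]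
    · rw [← hεj, ← hεi, ← Category.assoc, hξ]
  · intro i j k _ _ ξij ξjk ξik h1 h2 h3
    rw [← cancel_mono (wedgeι δ k), Category.assoc, h2, h1, h3]
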